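/- Let E be a quiver with E₀ finite, and let G ⊆ E₀ be a subset such that: (i) every sink of E (vertex emitting no arrow) belongs to G; (ii) every vertex lying on a closed path of E belongs to G; and (iii) G ≠ E₀. Then there exists a vertex v ∈ E₀ ∖ G such that s⁻¹(v) ≠ ∅ and r(α) ∈ G for every arrow α ∈ E₁ with s(α) = v. -/

import Mathlib

/-- A (nontrivial) path in the quiver `(E₀, E₁, s, r)`: a nonempty list of arrows in which
the range of each arrow is the source of the next. -/
structure QPath {E₀ E₁ : Type} (s r : E₁ → E₀) where
  arrows : List E₁
  ne : arrows ≠ []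
  chain : arrows.Chain' (fun a b => r a = s b)

namespace QPath

variable {E₀ E₁ : Type} {s r : E₁ → E₀}

/-- The source vertex of a path. -/
def source (γ : QPath s r) : E₀ := s (γ.arrows.head γ.ne)

/-- The range vertex of a path. -/
def range (γ : QPath s r) : E₀ := r (γ.arrows.getLast γ.ne)

/-- The list of vertices visited by a path: `s(α₁), r(α₁), …, r(α_m)`. -/
def vertices (γ : QPath s r) : List E₀ := s (γ.arrows.head γ.ne) :: γ.arrows.map r

end QPath

/-- Let `E` be a quiver with finitely many vertices and let `G ⊆ E₀` be
such that: (i) every sink of `E` belongs to `G`; (ii) every vertex lying on a closed path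
of `E` belongs to `G`; (iii) `G ≠ E₀`.  Then there is a vertex `v ∉ G` which emits at
least one arrow and all of whose emitted arrows have range in `G`. -/
theorem stmt14 {E₀ E₁ : Type} [Finite E₀] (s r : E₁ → E₀) (G : Set E₀)
    (hsink : ∀ v : E₀, (∀ α : E₁, s α ≠ v) → v ∈ G)
    (hclosed : ∀ γ : QPath s r, γ.source = γ.range → ∀ i ∈ γ.vertices, i ∈ G)
    (hne : G ≠ Set.univ) :
    ∃ v : E₀, v ∉ G ∧ (∃ α : E₁, s α = v) ∧ (∀ α : E₁, s α = v → r α ∈ G) := by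
  classical
  by_contra hcon
  push_neg at hcon
  -- For every v ∉ G there is an arrow from v to a vertex ∉ G.
  have hstep : ∀ v : E₀, v ∉ G → ∃ α : E₁, s α = v ∧ r α ∉ G := by
    intro v hv
    have hemit : ∃ α : E₁, s α = v := by
      by_contra h
      push_neg at h
      exact hv (hsink v h)
    obtain ⟨α, hα, hrα⟩ := hcon v hv hemit
    exact ⟨α, hα, hrα⟩
  -- complement is nonempty
  have : ∃ v : E₀, v ∉ G := by
    by_contra h
    push_neg at h
    exact hne (Set.eq_univ_of_forall h)
  obtain ⟨v₀, hv₀⟩ := this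
  set C := {v : E₀ // v ∉ G}
  have hC : ∀ c : C, ∃ α : E₁, s α = c.val ∧ r α ∉ G := fun c => hstep c.val c.property
  choose g hg1 hg2 using hC
  let f : C → C := fun c => ⟨r (g c), hg2 c⟩
  haveI : Finite C := Subtype.finite
  obtain ⟨m, n, hmn, heq⟩ := Finite.exists_ne_map_eq_of_infinite (fun k : ℕ => f^[k] ⟨v₀, hv₀⟩)
  -- WLOG m < n
  rcases Nat.lt_or_ge m n with hlt | hge
  case _ =>
    obtain ⟨K, hK⟩ : ∃ K, n = m + (K + 1) := ⟨n - m - 1, by omega⟩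
    set c₀ : C := f^[m] ⟨v₀, hv₀⟩ with hc₀
    have hcyc : f^[K + 1] c₀ = c₀ := by
      have : f^[m + (K+1)] ⟨v₀, hv₀⟩ = f^[m] ⟨v₀, hv₀⟩ := by
        rw [← hK]; exact heq.symm
      rwa [Nat.add_comm, Function.iterate_add_apply] at this
    -- build the closed path
    let L : List E₁ := (List.range (K + 1)).map (fun k => g (f^[k] c₀))
    have hLne : L ≠ [] := by simp [L]
    have hchain : L.Chain' (fun a b => r a = s b) := by
      show L.IsChain _
      rw [List.isChain_map, List.isChain_range_succ]
      intro k _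
      rw [hg1 (f^[k+1] c₀)]
      show r (g (f^[k] c₀)) = (f^[k+1] c₀).val
      rw [Function.iterate_succ_apply']
    let γ : QPath s r := ⟨L, hLne, hchain⟩
    have hhead : L.head hLne = g c₀ := by
      have : L.head hLne = g (f^[(List.range (K+1)).head (by simp)] c₀) := by
        simp [L, List.head_map]
      simpa [List.range_succ_eq_map] using this
    have hlast : L.getLast hLne = g (f^[K] c₀) := by
      have : L.getLast hLne = g (f^[(List.range (K+1)).getLast (by simp)] c₀) := by
        simp [L, List.getLast_map]
      simpa [List.getLast_range] using this
    have hsrc : γ.source = c₀.val := by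
      show s (L.head hLne) = c₀.val
      rw [hhead, hg1]
    have hrng : γ.range = c₀.val := by
      show r (L.getLast hLne) = c₀.val
      rw [hlast]
      have h1 : f (f^[K] c₀) = f^[K+1] c₀ := (Function.iterate_succ_apply' f K c₀).symm
      have : r (g (f^[K] c₀)) = (f (f^[K] c₀)).val := rfl
      rw [this, h1, hcyc]
    have hmem : c₀.val ∈ γ.vertices := by
      rw [← hsrc]
      exact List.mem_cons_self
    exact c₀.property (hclosed γ (hsrc.trans hrng.symm) c₀.val hmem)
  case _ =>
    -- symmetric case n < m
    have hlt : n < m := lt_of_le_of_ne hge (fun h => hmn h.symm)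
    obtain ⟨K, hK⟩ : ∃ K, m = n + (K + 1) := ⟨m - n - 1, by omega⟩
    set c₀ : C := f^[n] ⟨v₀, hv₀⟩ with hc₀
    have hcyc : f^[K + 1] c₀ = c₀ := by
      have : f^[n + (K+1)] ⟨v₀, hv₀⟩ = f^[n] ⟨v₀, hv₀⟩ := by
        rw [← hK]; exact heq
      rwa [Nat.add_comm, Function.iterate_add_apply] at this
    let L : List E₁ := (List.range (K + 1)).map (fun k => g (f^[k] c₀))
    have hLne : L ≠ [] := by simp [L]
    have hchain : L.Chain' (fun a b => r a = s b) := by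
      show L.IsChain _
      rw [List.isChain_map, List.isChain_range_succ]
      intro k _
      rw [hg1 (f^[k+1] c₀)]
      show r (g (f^[k] c₀)) = (f^[k+1] c₀).val
      rw [Function.iterate_succ_apply']
    let γ : QPath s r := ⟨L, hLne, hchain⟩
    have hhead : L.head hLne = g c₀ := by
      have : L.head hLne = g (f^[(List.range (K+1)).head (by simp)] c₀) := by
        simp [L, List.head_map]
      simpa [List.range_succ_eq_map] using this
    have hlast : L.getLast hLne = g (f^[K] c₀) := by
      have : L.getLast hLne = g (f^[(List.range (K+1)).getLast (by simp)] c₀) := by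
        simp [L, List.getLast_map]
      simpa [List.getLast_range] using this
    have hsrc : γ.source = c₀.val := by
      show s (L.head hLne) = c₀.val
      rw [hhead, hg1]
    have hrng : γ.range = c₀.val := by
      show r (L.getLast hLne) = c₀.val
      rw [hlast]
      have h1 : f (f^[K] c₀) = f^[K+1] c₀ := (Function.iterate_succ_apply' f K c₀).symm
      have : r (g (f^[K] c₀)) = (f (f^[K] c₀)).val := rfl
      rw [this, h1, hcyc]
    have hmem : c₀.val ∈ γ.vertices := by
      rw [← hsrc]
      exact List.mem_cons_self
    exact c₀.property (hclosed γ (hsrc.trans hrng.symm) c₀.val hmem)
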